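/- Let f, g : K → K be functions and λ₁, λ₂, λ₃ ∈ K be such that f(λ₁), f(λ₂), f(λ₃) are pairwise distinct. Define, for distinct k, l ∈ {1,2,3}, t_{kl} = (g(λ_l)/(f(λ_k) − f(λ_l)))·C_{kl} ∈ U(g)^{⊗3}. Then t satisfies the classical Yang–Baxter equation: YB(t)_{123} = 0. -/

import Mathlib

open scoped TensorProduct

noncomputable section

/-- `Σ i, u i ⊗ v i ⊗ 1` in `U(g)⊗U(g)⊗U(g)`: the tensor with factors in positions 1, 2. -/
def tensor12 (K : Type*) {L I : Type*} [Field K] [LieRing L] [LieAlgebra K L]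
    [Fintype I] (u v : I → L) :
    UniversalEnvelopingAlgebra K L ⊗[K]
      (UniversalEnvelopingAlgebra K L ⊗[K] UniversalEnvelopingAlgebra K L) :=
  ∑ i, UniversalEnvelopingAlgebra.ι K (u i) ⊗ₜ[K]
        (UniversalEnvelopingAlgebra.ι K (v i) ⊗ₜ[K] 1)

/-- `Σ i, u i ⊗ 1 ⊗ v i`: the tensor with factors in positions 1, 3. -/
def tensor13 (K : Type*) {L I : Type*} [Field K] [LieRing L] [LieAlgebra K L]
    [Fintype I] (u v : I → L) :
    UniversalEnvelopingAlgebra K L ⊗[K]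
      (UniversalEnvelopingAlgebra K L ⊗[K] UniversalEnvelopingAlgebra K L) :=
  ∑ i, UniversalEnvelopingAlgebra.ι K (u i) ⊗ₜ[K]
        ((1 : UniversalEnvelopingAlgebra K L) ⊗ₜ[K] UniversalEnvelopingAlgebra.ι K (v i))

/-- `Σ i, 1 ⊗ u i ⊗ v i`: the tensor with factors in positions 2, 3. -/
def tensor23 (K : Type*) {L I : Type*} [Field K] [LieRing L] [LieAlgebra K L]
    [Fintype I] (u v : I → L) :
    UniversalEnvelopingAlgebra K L ⊗[K]
      (UniversalEnvelopingAlgebra K L ⊗[K] UniversalEnvelopingAlgebra K L) :=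
  ∑ i, (1 : UniversalEnvelopingAlgebra K L) ⊗ₜ[K]
        (UniversalEnvelopingAlgebra.ι K (u i) ⊗ₜ[K] UniversalEnvelopingAlgebra.ι K (v i))

/- ### Auxiliary lemmas -/

lemma cybe_lie_sum_sum {I R : Type*} [Fintype I] [Ring R] (u v : I → R) :
    ⁅∑ i, u i, ∑ j, v j⁆ = ∑ i, ∑ j, ⁅u i, v j⁆ := by
  simp only [Ring.lie_def, Finset.sum_mul, Finset.mul_sum, Finset.sum_sub_distrib]
  rw [Finset.sum_comm (f := fun x i => u i * v x)]

section brk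
variable {K A : Type*} [Field K] [Ring A] [Algebra K A]

lemma cybe_brk1 (a b c d : A) :
    ⁅a ⊗ₜ[K] (b ⊗ₜ[K] (1:A)), c ⊗ₜ[K] ((1:A) ⊗ₜ[K] d)⁆ = ⁅a,c⁆ ⊗ₜ[K] (b ⊗ₜ[K] d) := by
  simp [Ring.lie_def, Algebra.TensorProduct.tmul_mul_tmul, TensorProduct.sub_tmul]

lemma cybe_brk2 (a b c d : A) :
    ⁅a ⊗ₜ[K] (b ⊗ₜ[K] (1:A)), (1:A) ⊗ₜ[K] (c ⊗ₜ[K] d)⁆ = a ⊗ₜ[K] (⁅b,c⁆ ⊗ₜ[K] d) := by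
  simp [Ring.lie_def, Algebra.TensorProduct.tmul_mul_tmul, TensorProduct.sub_tmul,
    TensorProduct.tmul_sub]

lemma cybe_brk3 (a b c d : A) :
    ⁅a ⊗ₜ[K] ((1:A) ⊗ₜ[K] b), (1:A) ⊗ₜ[K] (c ⊗ₜ[K] d)⁆ = a ⊗ₜ[K] (c ⊗ₜ[K] ⁅b,d⁆) := by
  simp [Ring.lie_def, Algebra.TensorProduct.tmul_mul_tmul, TensorProduct.sub_tmul,
    TensorProduct.tmul_sub]

lemma cybe_smul_lie (c d : K) (x y : A) :
    ⁅c • x, d • y⁆ = (c * d) • ⁅x, y⁆ := by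
  simp only [Ring.lie_def, mul_smul_comm, smul_mul_assoc, smul_sub, smul_smul, mul_comm c d]

end brk

section aux
variable {K L I : Type*} [Field K] [LieRing L] [LieAlgebra K L]
    [Fintype I] [DecidableEq I]
    (B : LinearMap.BilinForm K L) (e : Module.Basis I K L) (e' : I → L)

lemma cybe_expand_e (hdual : ∀ i j, B (e i) (e' j) = if i = j then 1 else 0) (y : L) :
    y = ∑ j, B y (e' j) • e j := by
  have h : ∀ j, B y (e' j) = e.repr y j := by
    intro j
    conv_lhs => rw [← e.sum_repr y]
    simp [-Module.Basis.sum_repr, map_sum, hdual]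
  simp_rw [h]
  exact (e.sum_repr y).symm

lemma cybe_expand_e' (hBsymm : ∀ x y, B x y = B y x) (hBnd : B.Nondegenerate)
    (hdual : ∀ i j, B (e i) (e' j) = if i = j then 1 else 0) (y : L) :
    y = ∑ j, B (e j) y • e' j := by
  have h0 : ∀ w, B w (y - ∑ j, B (e j) y • e' j) = 0 := by
    intro w
    have hi : ∀ i, B (e i) (y - ∑ j, B (e j) y • e' j) = 0 := by
      intro i
      simp [map_sub, map_sum, map_smul, hdual, Finset.sum_ite_eq']
    conv_lhs => rw [← e.sum_repr w]
    simp [-Module.Basis.sum_repr, map_sum, hi]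
  have := hBnd.1 _ (fun w => by rw [hBsymm]; exact h0 w)
  rw [sub_eq_zero] at this
  exact this

/-- Ad-invariance of the Casimir tensor, at the level of `L ⊗ L`. -/
lemma cybe_inv_tensor (hBsymm : ∀ x y, B x y = B y x)
    (hBinv : ∀ x y z, B ⁅x, y⁆ z = B x ⁅y, z⁆)
    (hBnd : B.Nondegenerate)
    (hdual : ∀ i j, B (e i) (e' j) = if i = j then 1 else 0) (x : L) :
    (∑ i, ⁅x, e i⁆ ⊗ₜ[K] e' i) + ∑ i, e i ⊗ₜ[K] ⁅x, e' i⁆ = 0 := by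
  have hL : (∑ i, ⁅x, e i⁆ ⊗ₜ[K] e' i)
      = ∑ i, ∑ j, B ⁅x, e i⁆ (e' j) • (e j ⊗ₜ[K] e' i) := by
    refine Finset.sum_congr rfl fun i _ => ?_
    conv_lhs => rw [cybe_expand_e B e e' hdual ⁅x, e i⁆]
    rw [TensorProduct.sum_tmul]
    exact Finset.sum_congr rfl fun j _ => by rw [TensorProduct.smul_tmul']
  have hR : (∑ i, e i ⊗ₜ[K] ⁅x, e' i⁆)
      = ∑ i, ∑ j, B (e j) ⁅x, e' i⁆ • (e i ⊗ₜ[K] e' j) := by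
    refine Finset.sum_congr rfl fun i _ => ?_
    conv_lhs => rw [cybe_expand_e' B e e' hBsymm hBnd hdual ⁅x, e' i⁆]
    rw [TensorProduct.tmul_sum]
    exact Finset.sum_congr rfl fun j _ => by rw [TensorProduct.tmul_smul]
  have hcoef : ∀ i j, B (e j) ⁅x, e' i⁆ = - B ⁅x, e j⁆ (e' i) := by
    intro i j
    rw [← hBinv, ← lie_skew (e j) x, map_neg, LinearMap.neg_apply]
  rw [hL, hR]
  rw [Finset.sum_comm (s := Finset.univ) (t := Finset.univ)
    (f := fun i j => B (e j) ⁅x, e' i⁆ • (e i ⊗ₜ[K] e' j))]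
  rw [← Finset.sum_add_distrib]
  refine Finset.sum_eq_zero fun i _ => ?_
  rw [← Finset.sum_add_distrib]
  refine Finset.sum_eq_zero fun j _ => ?_
  rw [hcoef]
  simp

/-- Invariance placed in factors 1,2 of `L ⊗ (L ⊗ L)`, with `c` in factor 3. -/
lemma cybe_claimA (hBsymm : ∀ x y, B x y = B y x)
    (hBinv : ∀ x y z, B ⁅x, y⁆ z = B x ⁅y, z⁆)
    (hBnd : B.Nondegenerate)
    (hdual : ∀ i j, B (e i) (e' j) = if i = j then 1 else 0) (x c : L) :
    (∑ i, ⁅x, e i⁆ ⊗ₜ[K] (e' i ⊗ₜ[K] c)) + ∑ i, e i ⊗ₜ[K] (⁅x, e' i⁆ ⊗ₜ[K] c) = 0 := by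
  have h := cybe_inv_tensor B e e' hBsymm hBinv hBnd hdual x
  have h2 := congrArg
    (TensorProduct.map (LinearMap.id (R := K) (M := L))
      ((TensorProduct.mk K L L).flip c)) h
  simpa [map_add, map_sum] using h2

/-- Invariance placed in factors 2,3 of `L ⊗ (L ⊗ L)`, with `a` in factor 1. -/
lemma cybe_claimB (hBsymm : ∀ x y, B x y = B y x)
    (hBinv : ∀ x y z, B ⁅x, y⁆ z = B x ⁅y, z⁆)
    (hBnd : B.Nondegenerate)
    (hdual : ∀ i j, B (e i) (e' j) = if i = j then 1 else 0) (x a : L) :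
    (∑ i, a ⊗ₜ[K] (⁅x, e i⁆ ⊗ₜ[K] e' i)) + ∑ i, a ⊗ₜ[K] (e i ⊗ₜ[K] ⁅x, e' i⁆) = 0 := by
  have h := cybe_inv_tensor B e e' hBsymm hBinv hBnd hdual x
  have h2 := congrArg (TensorProduct.mk K L (L ⊗[K] L) a) h
  simpa [map_add, map_sum] using h2

end aux

/- ### Main theorem -/
set_option maxHeartbeats 1000000

theorem cybe_solution_i
    {K L I : Type*} [Field K] [CharZero K] [LieRing L] [LieAlgebra K L]
    [Module.Finite K L] [Fintype I] [DecidableEq I]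
    (B : LinearMap.BilinForm K L)
    (hBsymm : ∀ x y, B x y = B y x)
    (hBinv : ∀ x y z, B ⁅x, y⁆ z = B x ⁅y, z⁆)
    (hBnd : B.Nondegenerate)
    (e : Module.Basis I K L) (e' : I → L)
    (hdual : ∀ i j, B (e i) (e' j) = if i = j then 1 else 0)
    (f g : K → K) (l1 l2 l3 : K)
    (h12 : f l1 ≠ f l2) (h13 : f l1 ≠ f l3) (h23 : f l2 ≠ f l3) :
    ⁅(g l2 / (f l1 - f l2)) • tensor12 K (⇑e) e',
      (g l3 / (f l1 - f l3)) • tensor13 K (⇑e) e'⁆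
    + ⁅(g l2 / (f l1 - f l2)) • tensor12 K (⇑e) e',
        (g l3 / (f l2 - f l3)) • tensor23 K (⇑e) e'⁆
    - ⁅(g l3 / (f l1 - f l3)) • tensor13 K (⇑e) e',
        (g l2 / (f l3 - f l2)) • tensor23 K (⇑e) e'⁆ = 0 := by
  classical
  letI : LieRing (UniversalEnvelopingAlgebra K L) := LieRing.ofAssociativeRing
  set ι' : L →ₗ[K] UniversalEnvelopingAlgebra K L :=
    (UniversalEnvelopingAlgebra.ι K : L →ₗ⁅K⁆ UniversalEnvelopingAlgebra K L).toLinearMap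
    with hι'
  set Φ : L ⊗[K] (L ⊗[K] L) →ₗ[K]
      UniversalEnvelopingAlgebra K L ⊗[K]
        (UniversalEnvelopingAlgebra K L ⊗[K] UniversalEnvelopingAlgebra K L) :=
    TensorProduct.map ι' (TensorProduct.map ι' ι') with hΦ
  have hΦt : ∀ x y z : L, Φ (x ⊗ₜ[K] (y ⊗ₜ[K] z)) =
      UniversalEnvelopingAlgebra.ι K x ⊗ₜ[K]
        (UniversalEnvelopingAlgebra.ι K y ⊗ₜ[K] UniversalEnvelopingAlgebra.ι K z) := by
    intro x y z; simp [hΦ, hι']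
  -- the three S-tensors in L ⊗ (L ⊗ L)
  set S1 : L ⊗[K] (L ⊗[K] L) := ∑ i, ∑ j, ⁅e i, e j⁆ ⊗ₜ[K] (e' i ⊗ₜ[K] e' j) with hS1d
  set S2 : L ⊗[K] (L ⊗[K] L) := ∑ i, ∑ j, e i ⊗ₜ[K] (⁅e' i, e j⁆ ⊗ₜ[K] e' j) with hS2d
  set S3 : L ⊗[K] (L ⊗[K] L) := ∑ i, ∑ j, e i ⊗ₜ[K] (e j ⊗ₜ[K] ⁅e' i, e' j⁆) with hS3d
  -- the three commutators
  have hc1 : ⁅tensor12 K (⇑e) e', tensor13 K (⇑e) e'⁆ = Φ S1 := by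
    unfold tensor12 tensor13
    refine (cybe_lie_sum_sum
      (fun i => UniversalEnvelopingAlgebra.ι K (e i) ⊗ₜ[K]
        (UniversalEnvelopingAlgebra.ι K (e' i) ⊗ₜ[K] (1 : UniversalEnvelopingAlgebra K L)))
      (fun i => UniversalEnvelopingAlgebra.ι K (e i) ⊗ₜ[K]
        ((1 : UniversalEnvelopingAlgebra K L) ⊗ₜ[K] UniversalEnvelopingAlgebra.ι K (e' i)))).trans ?_
    rw [hS1d, map_sum]
    refine Finset.sum_congr rfl fun i _ => ?_
    rw [map_sum]
    refine Finset.sum_congr rfl fun j _ => ?_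
    rw [cybe_brk1, hΦt, LieHom.map_lie]
  have hc2 : ⁅tensor12 K (⇑e) e', tensor23 K (⇑e) e'⁆ = Φ S2 := by
    unfold tensor12 tensor23
    refine (cybe_lie_sum_sum
      (fun i => UniversalEnvelopingAlgebra.ι K (e i) ⊗ₜ[K]
        (UniversalEnvelopingAlgebra.ι K (e' i) ⊗ₜ[K] (1 : UniversalEnvelopingAlgebra K L)))
      (fun i => (1 : UniversalEnvelopingAlgebra K L) ⊗ₜ[K]
        (UniversalEnvelopingAlgebra.ι K (e i) ⊗ₜ[K] UniversalEnvelopingAlgebra.ι K (e' i)))).trans ?_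
    rw [hS2d, map_sum]
    refine Finset.sum_congr rfl fun i _ => ?_
    rw [map_sum]
    refine Finset.sum_congr rfl fun j _ => ?_
    rw [cybe_brk2, hΦt, LieHom.map_lie]
  have hc3 : ⁅tensor13 K (⇑e) e', tensor23 K (⇑e) e'⁆ = Φ S3 := by
    unfold tensor13 tensor23
    refine (cybe_lie_sum_sum
      (fun i => UniversalEnvelopingAlgebra.ι K (e i) ⊗ₜ[K]
        ((1 : UniversalEnvelopingAlgebra K L) ⊗ₜ[K] UniversalEnvelopingAlgebra.ι K (e' i)))
      (fun i => (1 : UniversalEnvelopingAlgebra K L) ⊗ₜ[K]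
        (UniversalEnvelopingAlgebra.ι K (e i) ⊗ₜ[K] UniversalEnvelopingAlgebra.ι K (e' i)))).trans ?_
    rw [hS3d, map_sum]
    refine Finset.sum_congr rfl fun i _ => ?_
    rw [map_sum]
    refine Finset.sum_congr rfl fun j _ => ?_
    rw [cybe_brk3, hΦt, LieHom.map_lie]
  -- S2 = -S1
  have hS2 : S2 = -S1 := by
    rw [hS2d, hS1d, Finset.sum_comm,
      Finset.sum_comm (f := fun i j => ⁅e i, e j⁆ ⊗ₜ[K] (e' i ⊗ₜ[K] e' j)),
      ← Finset.sum_neg_distrib]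
    refine Finset.sum_congr rfl fun j _ => ?_
    have h := cybe_claimA B e e' hBsymm hBinv hBnd hdual (e j) (e' j)
    have step1 : (∑ i, e i ⊗ₜ[K] (⁅e' i, e j⁆ ⊗ₜ[K] e' j))
        = - ∑ i, e i ⊗ₜ[K] (⁅e j, e' i⁆ ⊗ₜ[K] e' j) := by
      rw [← Finset.sum_neg_distrib]
      refine Finset.sum_congr rfl fun i _ => ?_
      rw [← lie_skew (e j) (e' i), TensorProduct.neg_tmul, TensorProduct.tmul_neg, neg_neg]
    have step2 : (∑ i, ⁅e j, e i⁆ ⊗ₜ[K] (e' i ⊗ₜ[K] e' j))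
        = - ∑ i, ⁅e i, e j⁆ ⊗ₜ[K] (e' i ⊗ₜ[K] e' j) := by
      rw [← Finset.sum_neg_distrib]
      refine Finset.sum_congr rfl fun i _ => ?_
      rw [← lie_skew (e i) (e j), TensorProduct.neg_tmul, neg_neg]
    rw [step2] at h
    rw [step1, neg_inj]
    exact (neg_add_eq_zero.mp h).symm
  -- S3 = -S2
  have hS3 : S3 = -S2 := by
    rw [hS3d, hS2d, ← Finset.sum_neg_distrib]
    refine Finset.sum_congr rfl fun i _ => ?_
    have h := cybe_claimB B e e' hBsymm hBinv hBnd hdual (e' i) (e i)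
    rw [add_comm] at h
    exact eq_neg_of_add_eq_zero_left h
  have hS3' : S3 = S1 := by rw [hS3, hS2, neg_neg]
  -- assemble
  have h12' : f l1 - f l2 ≠ 0 := sub_ne_zero.mpr h12
  have h13' : f l1 - f l3 ≠ 0 := sub_ne_zero.mpr h13
  have h23' : f l2 - f l3 ≠ 0 := sub_ne_zero.mpr h23
  have h32' : f l3 - f l2 ≠ 0 := sub_ne_zero.mpr (Ne.symm h23)
  have hco : g l2 / (f l1 - f l2) * (g l3 / (f l1 - f l3))
      - g l2 / (f l1 - f l2) * (g l3 / (f l2 - f l3))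
      - g l3 / (f l1 - f l3) * (g l2 / (f l3 - f l2)) = 0 := by
    field_simp
    ring
  have k1 := cybe_smul_lie (K := K) (g l2 / (f l1 - f l2)) (g l3 / (f l1 - f l3))
    (tensor12 K (⇑e) e') (tensor13 K (⇑e) e')
  have k2 := cybe_smul_lie (K := K) (g l2 / (f l1 - f l2)) (g l3 / (f l2 - f l3))
    (tensor12 K (⇑e) e') (tensor23 K (⇑e) e')
  have k3 := cybe_smul_lie (K := K) (g l3 / (f l1 - f l3)) (g l2 / (f l3 - f l2))
    (tensor13 K (⇑e) e') (tensor23 K (⇑e) e')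
  rw [k1, k2, k3]
  rw [hc1, hc2, hc3, hS2, hS3', map_neg, smul_neg]
  match_scalars
  field_simp
  ring
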